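/- arXiv:1602.03501 — 2 statements merged into one kernel-verified Lean document; each statement's English description precedes it below -/
import Mathlib

section
/- Let C and D be small categories and let L : Psh(C) ⥤ Psh(D) be a left adjoint functor. Then there exist a small category B and functors F : C ⥤ B and G : D ⥤ B such that L is naturally isomorphic to the composite Σ_F ⋙ Δ_G : Psh(C) ⥤ Psh(B) ⥤ Psh(D). (The category B may be taken to be the collage of the bimodule corresponding to L, with F and G the collage inclusions.) -/
open CategoryTheory Limits

universe u

section Collage
variable {C D : Type u} [SmallCategory C] [SmallCategory D]
variable (L : (Cᵒᵖ ⥤ Type u) ⥤ (Dᵒᵖ ⥤ Type u))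

def CollageHom : C ⊕ D → C ⊕ D → Type u
  | .inl c, .inl c' => c ⟶ c'
  | .inl _, .inr _ => PEmpty
  | .inr d, .inl c => (L.obj (yoneda.obj c)).obj (Opposite.op d)
  | .inr d, .inr d' => d ⟶ d'

def collageId : ∀ X : C ⊕ D, CollageHom L X X
  | .inl c => 𝟙 c
  | .inr d => 𝟙 d

def collageComp : ∀ {X Y Z : C ⊕ D}, CollageHom L X Y → CollageHom L Y Z → CollageHom L X Z
  | .inl _, .inl _, .inl _, f, g => f ≫ g
  | .inl _, .inl _, .inr _, _, g => g.elim
  | .inl _, .inr _, _, f, _ => f.elim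
  | .inr _, .inl _, .inl _, f, g => (L.map (yoneda.map g)).app _ f
  | .inr _, .inl _, .inr _, _, g => g.elim
  | .inr _, .inr _, .inl _, f, g => (L.obj (yoneda.obj _)).map f.op g
  | .inr _, .inr _, .inr _, f, g => f ≫ g

def Collage (_ : (Cᵒᵖ ⥤ Type u) ⥤ (Dᵒᵖ ⥤ Type u)) := C ⊕ D

instance collageStruct : CategoryStruct.{u} (Collage L) where
  Hom := CollageHom L
  id := collageId L
  comp := collageComp L

instance : SmallCategory (Collage L) := by
  refine { toCategoryStruct := collageStruct L, id_comp := ?_, comp_id := ?_, assoc := ?_ }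
  · rintro (x|x) (y|y) f
    · exact Category.id_comp f
    · exact PEmpty.elim f
    · show (L.obj (yoneda.obj y)).map (𝟙 x).op f = f
      simp
      rfl
    · exact Category.id_comp f
  · rintro (x|x) (y|y) f
    · exact Category.comp_id f
    · exact PEmpty.elim f
    · show (L.map (yoneda.map (𝟙 y))).app _ f = f
      simp
      rfl
    · exact Category.comp_id f
  · rintro (w|w) (x|x) (y|y) (z|z) f g h
    all_goals try exact PEmpty.elim f
    all_goals try exact PEmpty.elim g
    all_goals try exact PEmpty.elim h
    · exact Category.assoc f g h
    · show (L.map (yoneda.map h)).app (Opposite.op w) ((L.map (yoneda.map g)).app _ f) =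
        (L.map (yoneda.map (g ≫ h))).app _ f
      change x ⟶ y at g
      change y ⟶ z at h
      show (L.map (yoneda.map h)).app (Opposite.op w) ((L.map (yoneda.map g)).app _ f) =
        (L.map (yoneda.map (g ≫ h))).app _ f
      rw [yoneda.map_comp, L.map_comp]
      rfl
    · show (L.map (yoneda.map h)).app _ ((L.obj (yoneda.obj y)).map f.op g) =
        (L.obj (yoneda.obj z)).map f.op ((L.map (yoneda.map h)).app _ g)
      exact NatTrans.naturality_apply (L.map (yoneda.map h)) f.op g
    · show (L.obj (yoneda.obj z)).map (f ≫ g).op h =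
        (L.obj (yoneda.obj z)).map f.op ((L.obj (yoneda.obj z)).map g.op h)
      exact FunctorToTypes.map_comp_apply _ g.op f.op h
    · exact Category.assoc f g h

def collageInl : C ⥤ Collage L where
  obj := Sum.inl
  map f := f
  map_id _ := rfl
  map_comp _ _ := rfl

def collageInr : D ⥤ Collage L where
  obj := Sum.inr
  map f := f
  map_id _ := rfl
  map_comp _ _ := rfl

end Collage

/-- Every left adjoint functor `L : Psh(C) ⥤ Psh(D)` between presheaf categories on small
categories factors, up to natural isomorphism, as a left pushforward followed by a
pullback: there exist a small category `B` (the collage) and functors `F : C ⥤ B`,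
`G : D ⥤ B` (the collage inclusions) with `L ≅ Σ_F ⋙ Δ_G`. -/
theorem leftAdjoint_iso_sigma_comp_delta {C D : Type u} [SmallCategory C] [SmallCategory D]
    (L : (Cᵒᵖ ⥤ Type u) ⥤ (Dᵒᵖ ⥤ Type u)) [L.IsLeftAdjoint] :
    ∃ (B : Cat.{u, u}) (F : C ⥤ B) (G : D ⥤ B),
      Nonempty (L ≅ F.op.lan ⋙ (Functor.whiskeringLeft Dᵒᵖ Bᵒᵖ (Type u)).obj G.op) := by
  refine ⟨Cat.of (Collage L), collageInl L, collageInr L, ⟨?_⟩⟩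
  set F := collageInl L
  set G := collageInr L
  set Δ : ((Collage L)ᵒᵖ ⥤ Type u) ⥤ (Dᵒᵖ ⥤ Type u) :=
    (Functor.whiskeringLeft Dᵒᵖ (Collage L)ᵒᵖ (Type u)).obj G.op with hΔ
  -- the restriction of both sides along yoneda agree
  have e₁ : yoneda ⋙ L ≅ (F ⋙ yoneda) ⋙ Δ := by
    refine NatIso.ofComponents (fun c => NatIso.ofComponents (fun d => Iso.refl _) ?_) ?_
    · intro d d' g
      ext x
      exact rfl
    · intro c c' f
      ext d x
      exact rfl
  have e₂ : yoneda ⋙ L ≅ yoneda ⋙ (F.op.lan ⋙ Δ) :=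
    e₁ ≪≫ Functor.isoWhiskerRight (Functor.isoWhiskerLeft F uliftYonedaIsoYoneda.{u}.symm ≪≫
      Presheaf.compULiftYonedaIsoULiftYonedaCompLan F ≪≫
      Functor.isoWhiskerRight uliftYonedaIsoYoneda.{u} F.op.lan) Δ ≪≫ Functor.associator _ _ _
  haveI : PreservesColimitsOfSize.{u, u} L :=
    (Adjunction.ofIsLeftAdjoint L).leftAdjoint_preservesColimits
  haveI : PreservesColimitsOfSize.{u, u} (F.op.lan ⋙ Δ) := by
    haveI : PreservesColimitsOfSize.{u, u} (F.op.lan) :=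
      (F.op.lanAdjunction (Type u)).leftAdjoint_preservesColimits
    haveI : PreservesColimitsOfSize.{u, u} Δ := inferInstance
    infer_instance
  exact (Presheaf.uniqueExtensionAlongULiftYoneda L (Iso.refl (uliftYoneda.{u} ⋙ L))) ≪≫
    (Presheaf.uniqueExtensionAlongULiftYoneda (F.op.lan ⋙ Δ)
      (Functor.isoWhiskerRight uliftYonedaIsoYoneda.{u} L ≪≫ e₂ ≪≫
        Functor.isoWhiskerRight uliftYonedaIsoYoneda.{u}.symm _)).symm
end

section
/- Let C and D be small categories and let R : Psh(D) ⥤ Psh(C) be a right adjoint functor. Then there exist a small category B and functors F : C ⥤ B and G : D ⥤ B such that R is naturally isomorphic to the composite Π_G ⋙ Δ_F : Psh(D) ⥤ Psh(B) ⥤ Psh(C). In other words, every right adjoint between presheaf categories is naturally isomorphic to a right pushforward followed by a pullback. -/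
open CategoryTheory Limits

universe u

namespace CollageAux

variable {C D : Type u} [SmallCategory C] [SmallCategory D]
  (Ly : C ⥤ (Dᵒᵖ ⥤ Type u))

def Collage (_ : C ⥤ (Dᵒᵖ ⥤ Type u)) : Type u := C ⊕ D

def CollHom : Collage Ly → Collage Ly → Type u
  | .inl c, .inl c' => c ⟶ c'
  | .inr d, .inr d' => d ⟶ d'
  | .inr d, .inl c => (Ly.obj c).obj (Opposite.op d)
  | .inl _, .inr _ => PEmpty

def collId : ∀ X : Collage Ly, CollHom Ly X X
  | .inl c => 𝟙 c
  | .inr d => 𝟙 d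

def collComp : ∀ {X Y Z : Collage Ly}, CollHom Ly X Y → CollHom Ly Y Z → CollHom Ly X Z
  | .inl _, .inl _, .inl _, f, g => f ≫ g
  | .inr _, .inr _, .inr _, f, g => f ≫ g
  | .inr _, .inr _, .inl _, f, m => (Ly.obj _).map f.op m
  | .inr _, .inl _, .inl _, m, g => (Ly.map g).app _ m
  | .inl _, .inr _, _, f, _ => f.elim
  | .inr _, .inl _, .inr _, _, g => g.elim
  | .inl _, .inl _, .inr _, _, g => g.elim

lemma coll_id_comp : ∀ {X Y : Collage Ly} (f : CollHom Ly X Y),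
    collComp Ly (collId Ly X) f = f
  | .inl _, .inl _, f => by simp [collId, collComp]; exact Category.id_comp _
  | .inr _, .inr _, f => by simp [collId, collComp]; exact Category.id_comp _
  | .inr _, .inl _, m => by simp [collId, collComp]; rfl
  | .inl _, .inr _, f => f.elim

lemma coll_comp_id : ∀ {X Y : Collage Ly} (f : CollHom Ly X Y),
    collComp Ly f (collId Ly Y) = f
  | .inl _, .inl _, f => by simp [collId, collComp]; exact Category.comp_id _
  | .inr _, .inr _, f => by simp [collId, collComp]; exact Category.comp_id _
  | .inr _, .inl _, m => by simp [collId, collComp]; rfl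
  | .inl _, .inr _, f => f.elim

lemma coll_assoc : ∀ {W X Y Z : Collage Ly} (f : CollHom Ly W X) (g : CollHom Ly X Y)
    (h : CollHom Ly Y Z),
    collComp Ly (collComp Ly f g) h = collComp Ly f (collComp Ly g h)
  | .inl _, .inl _, .inl _, .inl _, f, g, h => by simp [collComp]; exact Category.assoc _ _ _
  | .inr _, .inr _, .inr _, .inr _, f, g, h => by simp [collComp]; exact Category.assoc _ _ _
  | .inr _, .inr _, .inr _, .inl _, f, g, m => by
      simp [collComp, FunctorToTypes.map_comp_apply]; exact FunctorToTypes.map_comp_apply _ _ _ _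
  | .inr _, .inr _, .inl _, .inl _, f, m, g => by
      simp [collComp, FunctorToTypes.naturality]; exact FunctorToTypes.naturality _ _ _
  | .inr _, .inl _, .inl _, .inl _, m, f, g => by
      simp [collComp, FunctorToTypes.comp]; erw [Functor.map_comp]; rfl
  | .inl _, .inr _, _, _, f, _, _ => f.elim
  | .inr _, .inl _, .inr _, _, _, g, _ => g.elim
  | .inl _, .inl _, .inr _, _, _, g, _ => g.elim
  | .inr _, .inr _, .inl _, .inr _, _, _, h => h.elim
  | .inr _, .inl _, .inl _, .inr _, _, _, h => h.elim
  | .inl _, .inl _, .inl _, .inr _, _, _, h => h.elim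

instance : Category (Collage Ly) where
  Hom := CollHom Ly
  id := collId Ly
  comp := collComp Ly
  id_comp := coll_id_comp Ly
  comp_id := coll_comp_id Ly
  assoc := coll_assoc Ly

def inlF : C ⥤ Collage Ly where
  obj c := .inl c
  map f := f
  map_id _ := rfl
  map_comp _ _ := rfl

def inrF : D ⥤ Collage Ly where
  obj d := .inr d
  map f := f
  map_id _ := rfl
  map_comp _ _ := rfl

end CollageAux

namespace CollageAux
variable {C D : Type u} [SmallCategory C] [SmallCategory D]
  (Ly : C ⥤ (Dᵒᵖ ⥤ Type u))

def keyIso :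
    inlF Ly ⋙ yoneda ⋙ (Functor.whiskeringLeft Dᵒᵖ (Collage Ly)ᵒᵖ (Type u)).obj (inrF Ly).op ≅ Ly :=
  NatIso.ofComponents
    (fun c => NatIso.ofComponents (fun d => Iso.refl _) (by
      intro d d' f
      ext m
      rfl))
    (by
      intro c c' g
      ext d m
      rfl)

noncomputable def compYonedaIsoYonedaCompLan {C' B : Type u} [SmallCategory C']
    [SmallCategory B] (F : C' ⥤ B) : F ⋙ yoneda ≅ yoneda ⋙ F.op.lan :=
  Functor.isoWhiskerLeft F uliftYonedaIsoYoneda.{u, u}.symm ≪≫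
    Presheaf.compULiftYonedaIsoULiftYonedaCompLan.{u} F ≪≫
    Functor.isoWhiskerRight uliftYonedaIsoYoneda.{u, u} _

noncomputable def uniqueExtensionAlongYoneda {C' D' : Type u} [SmallCategory C'] [SmallCategory D']
    {A : C' ⥤ (D'ᵒᵖ ⥤ Type u)} (L : (C'ᵒᵖ ⥤ Type u) ⥤ (D'ᵒᵖ ⥤ Type u)) (e : A ≅ yoneda ⋙ L)
    [PreservesColimitsOfSize.{u, u} L] : L ≅ uliftYoneda.{u}.leftKanExtension A :=
  Presheaf.uniqueExtensionAlongULiftYoneda.{u} L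
    (e ≪≫ Functor.isoWhiskerRight uliftYonedaIsoYoneda.{u, u}.symm L)

end CollageAux

/-- Every right adjoint functor `R : Psh(D) ⥤ Psh(C)` between presheaf categories on small
categories factors, up to natural isomorphism, as a right pushforward followed by a
pullback: there exist a small category `B` (the collage) and functors `F : C ⥤ B`,
`G : D ⥤ B` (the collage inclusions) with `R ≅ Π_G ⋙ Δ_F`. -/
theorem rightAdjoint_iso_pi_comp_delta {C D : Type u} [SmallCategory C] [SmallCategory D]
    (R : (Dᵒᵖ ⥤ Type u) ⥤ (Cᵒᵖ ⥤ Type u)) [R.IsRightAdjoint] :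
    ∃ (B : Cat.{u, u}) (F : C ⥤ B) (G : D ⥤ B),
      Nonempty (R ≅ G.op.ran ⋙ (Functor.whiskeringLeft Cᵒᵖ Bᵒᵖ (Type u)).obj F.op) := by
  classical
  let adj : R.leftAdjoint ⊣ R := Adjunction.ofIsRightAdjoint R
  let Ly : C ⥤ (Dᵒᵖ ⥤ Type u) := yoneda ⋙ R.leftAdjoint
  refine ⟨Cat.of (CollageAux.Collage Ly), CollageAux.inlF Ly, CollageAux.inrF Ly, ⟨?_⟩⟩
  let F := CollageAux.inlF Ly
  let G := CollageAux.inrF Ly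
  let Δ : ((CollageAux.Collage Ly)ᵒᵖ ⥤ Type u) ⥤ (Dᵒᵖ ⥤ Type u) :=
    (Functor.whiskeringLeft Dᵒᵖ (CollageAux.Collage Ly)ᵒᵖ (Type u)).obj G.op
  let adj' : (F.op.lan ⋙ Δ) ⊣ (G.op.ran ⋙ (Functor.whiskeringLeft Cᵒᵖ _ (Type u)).obj F.op) :=
    (F.op.lanAdjunction (Type u)).comp (G.op.ranAdjunction (Type u))
  haveI h1 : PreservesColimitsOfSize.{u, u} R.leftAdjoint :=
    adj.leftAdjoint_preservesColimits
  haveI h2 : PreservesColimitsOfSize.{u, u} (F.op.lan ⋙ Δ) :=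
    adj'.leftAdjoint_preservesColimits
  let e' : Ly ≅ yoneda ⋙ (F.op.lan ⋙ Δ) :=
    (CollageAux.keyIso Ly).symm ≪≫
      (Functor.associator _ _ _).symm ≪≫
      Functor.isoWhiskerRight (CollageAux.compYonedaIsoYonedaCompLan F) Δ ≪≫
      Functor.associator _ _ _
  let isoL : R.leftAdjoint ≅ F.op.lan ⋙ Δ :=
    (CollageAux.uniqueExtensionAlongYoneda R.leftAdjoint (Iso.refl Ly)) ≪≫
      (CollageAux.uniqueExtensionAlongYoneda (F.op.lan ⋙ Δ) e').symm
  exact (adj.ofNatIsoLeft isoL).rightAdjointUniq adj'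
end
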